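/- Let k be a number field of degree d, S a finite set of places containing the archimedean ones with |S| = r+1, and let α_1,...,α_q (1 ≤ q ≤ r) be multiplicatively independent S-units with logarithmic embeddings α_j = (d_v log‖α_j‖_v)_{v∈S} ∈ R^{r+1}. Then ‖α_1 ∧ α_2 ∧ ⋯ ∧ α_q‖_1 ≤ 2^{−q} C(q,r) Π_{j=1}^q ‖α_j‖_1, where C(q,r) = min{2^q, ((r+1)/(r+1−q))^{r+1−q}}. Equivalently, ‖α_1 ∧ ⋯ ∧ α_q‖_1 ≤ C(q,r) Π_j ([k:Q] h(α_j)). -/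

import Mathlib

open Finset in
/-- The Schinzel norm `δ(x) = max{Σ xₘ⁺, Σ xₙ⁻}` on `ℝ^N`. -/
noncomputable def schinzelDelta {N : ℕ} (x : Fin N → ℝ) : ℝ :=
  max (∑ m, max (x m) 0) (∑ n, max (-(x n)) 0)

/-- The set `E_N = {±e_m}` of signed standard basis vectors. -/
def schE (N : ℕ) : Set (Fin N → ℝ) :=
  {x | ∃ m, x = Pi.single m 1 ∨ x = -Pi.single m 1}

/-- The set `F_N = {e_m − e_n : m ≠ n}`. -/
def schF (N : ℕ) : Set (Fin N → ℝ) :=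
  {x | ∃ m n, m ≠ n ∧ x = Pi.single m 1 - Pi.single n 1}

open Finset in
/-- The `ℓ¹`-norm of the exterior product `x₁ ∧ ⋯ ∧ x_L`: the sum, over all
`L`-element subsets `I ⊆ {1,…,N}`, of the absolute values of the `L×L` minors
(rows indexed by `I`) of the `N×L` matrix with columns `x₁,…,x_L`. -/
noncomputable def wedgeL1 {N L : ℕ} (x : Fin L → Fin N → ℝ) : ℝ :=
  ∑ I : Finset (Fin N), if h : I.card = L then
    |(Matrix.of fun i j => x j ((I.orderIsoOfFin h i : Fin N))).det| else 0

open Finset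

def IsSP {s : ℕ} (c : Fin s → ℝ) : Prop :=
  ∃ a b : Option (Fin s),
    ∀ i, c i = (if a = some i then (1:ℝ) else 0) - (if b = some i then 1 else 0)

lemma isSP_entry_abs {s : ℕ} {c : Fin s → ℝ} (h : IsSP c) (i : Fin s) : |c i| ≤ 1 := by
  obtain ⟨a, b, hc⟩ := h
  rw [hc i]
  rcases eq_or_ne a (some i) with h1 | h1 <;> rcases eq_or_ne b (some i) with h2 | h2 <;>
    simp [h1, h2]

/-- A square matrix all of whose columns are signed partial indicators has `|det| ≤ 1`. -/
lemma tu_det : ∀ {s : ℕ} (M : Matrix (Fin s) (Fin s) ℝ),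
    (∀ j, IsSP (fun i => M i j)) → |M.det| ≤ 1 := by
  intro s
  induction s with
  | zero => intro M _; simp [Matrix.det_fin_zero]
  | succ t ih =>
    intro M hM
    -- case 1: some column has at most one nonzero entry
    by_cases hdeg : ∃ j, ∀ i i', M i j ≠ 0 → M i' j ≠ 0 → i = i'
    · obtain ⟨j, hj⟩ := hdeg
      by_cases h0 : ∀ i, M i j = 0
      · rw [Matrix.det_eq_zero_of_column_eq_zero j h0]; simp
      · push_neg at h0
        obtain ⟨i₀, hi₀⟩ := h0
        have hexp := Matrix.det_succ_column M j
        have hterm : ∀ i : Fin (t+1), i ≠ i₀ →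
            (-1:ℝ) ^ ((i:ℕ) + (j:ℕ)) * M i j * (M.submatrix i.succAbove j.succAbove).det = 0 := by
          intro i hi
          have : M i j = 0 := by
            by_contra h
            exact hi (hj i i₀ h hi₀)
          simp [this]
        rw [hexp, Finset.sum_eq_single i₀ (fun i _ hi => hterm i hi) (by simp)]
        have hminor : |(M.submatrix i₀.succAbove j.succAbove).det| ≤ 1 := by
          apply ih
          intro j'
          obtain ⟨a, b, hab⟩ := hM (j.succAbove j')
          refine ⟨a.bind (fun x => if h : ∃ y, i₀.succAbove y = x then some h.choose else none),
                  b.bind (fun x => if h : ∃ y, i₀.succAbove y = x then some h.choose else none), ?_⟩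
          intro i
          have key : ∀ o : Option (Fin (t+1)),
              (if o.bind (fun x => if h : ∃ y, i₀.succAbove y = x then some h.choose else none)
                  = some i then (1:ℝ) else 0) = (if o = some (i₀.succAbove i) then 1 else 0) := by
            intro o
            match o with
            | none => simp
            | some x =>
              by_cases hx : ∃ y, i₀.succAbove y = x
              · have hcx := hx.choose_spec
                simp only [Option.bind_some, dif_pos hx]
                by_cases he : hx.choose = i
                · rw [if_pos (by rw [he]), if_pos (by rw [← hcx, he])]
                · rw [if_neg (fun hc => he (by injection hc)), if_neg ?_]
                  intro hc
                  apply he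
                  apply Fin.succAbove_right_injective (p := i₀)
                  rw [hcx]
                  injection hc
              · simp only [Option.bind_some, dif_neg hx]
                rw [if_neg (by simp), if_neg]
                intro hc
                exact hx ⟨i, by injection hc.symm⟩
          simp only [Matrix.submatrix_apply]
          rw [key a, key b]
          exact hab (i₀.succAbove i)
        calc |(-1:ℝ) ^ ((i₀:ℕ) + (j:ℕ)) * M i₀ j * (M.submatrix i₀.succAbove j.succAbove).det|
            = |M i₀ j| * |(M.submatrix i₀.succAbove j.succAbove).det| := by
              rw [abs_mul, abs_mul, abs_pow, abs_neg, abs_one, one_pow, one_mul]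
          _ ≤ 1 * 1 := by
              apply mul_le_mul (isSP_entry_abs (hM j) i₀) hminor (abs_nonneg _) zero_le_one
          _ = 1 := by ring
    -- case 2: every column has two distinct nonzero entries → column sums vanish → det = 0
    · push_neg at hdeg
      have hsum : ∀ j, ∑ i, M i j = 0 := by
        intro j
        obtain ⟨i₁, i₂, h1, h2, hne⟩ := hdeg j
        obtain ⟨a, b, hab⟩ := hM j
        -- a and b are both `some` and distinct
        match a, b with
        | none, none => exfalso; apply h1; simp [hab i₁]
        | none, some y =>
            exfalso
            apply hne
            have e1 : i₁ = y := by by_contra h; apply h1; simp [hab i₁, Option.some_inj, Ne.symm h]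
            have e2 : i₂ = y := by by_contra h; apply h2; simp [hab i₂, Option.some_inj, Ne.symm h]
            rw [e1, e2]
        | some x, none =>
            exfalso
            apply hne
            have e1 : i₁ = x := by by_contra h; apply h1; simp [hab i₁, Option.some_inj, Ne.symm h]
            have e2 : i₂ = x := by by_contra h; apply h2; simp [hab i₂, Option.some_inj, Ne.symm h]
            rw [e1, e2]
        | some x, some y =>
            have hxy : x ≠ y := by
              intro h
              apply hne
              have e1 : i₁ = x ∨ i₁ = y := by
                by_contra hcon
                push_neg at hcon
                apply h1
                simp [hab i₁, Option.some_inj, Ne.symm hcon.1, Ne.symm hcon.2]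
              have e2 : i₂ = x ∨ i₂ = y := by
                by_contra hcon
                push_neg at hcon
                apply h2
                simp [hab i₂, Option.some_inj, Ne.symm hcon.1, Ne.symm hcon.2]
              rcases e1 with e1 | e1 <;> rcases e2 with e2 | e2 <;> simp [e1, e2, h]
            have : ∑ i, M i j = ∑ i, ((if x = i then (1:ℝ) else 0) - (if y = i then 1 else 0)) := by
              apply Finset.sum_congr rfl
              intro i _
              simpa using hab i
            rw [this, Finset.sum_sub_distrib]
            simp
      have : M.det = 0 := by
        rw [← Matrix.exists_vecMul_eq_zero_iff]
        refine ⟨fun _ => 1, ?_, ?_⟩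
        · intro h
          have := congrFun h 0
          simp at this
        · funext j
          simpa [Matrix.vecMul, dotProduct] using hsum j
      rw [this]; simp
noncomputable def pullIdx {s N : ℕ} (emb : Fin s → Fin N) (a : Fin N) : Option (Fin s) :=
  if h : ∃ i, emb i = a then some h.choose else none

lemma pullIdx_spec {s N : ℕ} {emb : Fin s → Fin N} (hemb : Function.Injective emb)
    (a : Fin N) (i : Fin s) :
    (if pullIdx emb a = some i then (1:ℝ) else 0) = if emb i = a then 1 else 0 := by
  unfold pullIdx
  by_cases h : ∃ i', emb i' = a
  · have hc := h.choose_spec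
    rw [dif_pos h]
    by_cases he : h.choose = i
    · rw [if_pos (by rw [he]), if_pos (by rw [← he]; exact hc)]
    · rw [if_neg (fun hcon => he (by injection hcon)), if_neg
        (fun hcon => he (hemb (hc.trans hcon.symm)))]
  · rw [dif_neg h, if_neg (by simp), if_neg (fun hcon => h ⟨i, hcon⟩)]

/-- An "edge" column restricted along an injection is a signed partial indicator. -/
lemma isSP_edge {s N : ℕ} {emb : Fin s → Fin N} (hemb : Function.Injective emb)
    (m n : Fin N) :
    IsSP (fun i => (if emb i = m then (1:ℝ) else 0) - (if emb i = n then 1 else 0)) := by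
  exact ⟨pullIdx emb m, pullIdx emb n, fun i => by
    rw [pullIdx_spec hemb m i, pullIdx_spec hemb n i]⟩

lemma isSP_basis {s N : ℕ} {emb : Fin s → Fin N} (hemb : Function.Injective emb)
    (m : Fin N) :
    IsSP (fun i => (if emb i = m then (1:ℝ) else 0)) := by
  refine ⟨pullIdx emb m, none, fun i => by
    rw [pullIdx_spec hemb m i]; simp⟩
lemma wedgeL1_nonneg {N L : ℕ} (x : Fin L → Fin N → ℝ) : 0 ≤ wedgeL1 x := by
  apply Finset.sum_nonneg
  intro I _
  split <;> simp [abs_nonneg]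

lemma det_cols_expand {N q : ℕ} {T : Type} [Fintype T]
    (w : T → Fin N → ℝ) (γ : Fin q → T → ℝ)
    (emb : Fin q → Fin N) :
    (Matrix.of fun i j => (∑ t, γ j t * w t (emb i))).det
      = ∑ f : Fin q → T, (∏ j, γ j (f j)) * (Matrix.of fun i j => w (f j) (emb i)).det := by
  rw [← Matrix.det_transpose]
  have h1 : (Matrix.of fun i j => (∑ t, γ j t * w t (emb i))).transpose
      = Matrix.of (fun j i => ∑ t, γ j t * w t (emb i)) := rfl
  rw [h1]
  have h2 : (Matrix.of (fun (j : Fin q) (i : Fin q) => ∑ t, γ j t * w t (emb i))).det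
      = Matrix.detRowAlternating (Matrix.of (fun j i => ∑ t, γ j t * w t (emb i))) := rfl
  rw [h2]
  have h3 : (Matrix.of (fun (j : Fin q) (i : Fin q) => ∑ t, γ j t * w t (emb i)))
      = fun j => ∑ t, γ j t • (fun i => w t (emb i)) := by
    funext j i
    simp [Finset.sum_apply]
  rw [h3]
  have h5 : (Matrix.detRowAlternating (fun j => ∑ t : T, γ j t • (fun i => w t (emb i))))
      = Matrix.detRowAlternating.toMultilinearMap (fun j => ∑ t : T, γ j t • (fun i => w t (emb i))) := rfl
  rw [h5, Matrix.detRowAlternating.toMultilinearMap.map_sum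
    (g := fun j t => γ j t • (fun i => w t (emb i)))]
  apply Finset.sum_congr rfl
  intro f _
  have := Matrix.detRowAlternating.toMultilinearMap.map_smul_univ
    (fun j => γ j (f j)) (fun j => (fun i => w (f j) (emb i)))
  have h4 : Matrix.detRowAlternating (fun j i => w (f j) (emb i))
      = (Matrix.of fun i j => w (f j) (emb i)).det := by
    rw [← Matrix.det_transpose]; rfl
  rw [this, smul_eq_mul]
  exact congrArg (fun z => (∏ i : Fin q, γ i (f i)) * z) h4

lemma wedgeL1_le_of_decomp {N q : ℕ} {T : Type} [Fintype T]
    (w : T → Fin N → ℝ) (γ : Fin q → T → ℝ) (x : Fin q → Fin N → ℝ)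
    (hx : ∀ j v, x j v = ∑ t, γ j t * w t v)
    {C : ℝ} (hC : 0 ≤ C)
    (hw : ∀ f : Fin q → T, wedgeL1 (fun j => w (f j)) ≤ C) :
    wedgeL1 x ≤ C * ∏ j, ∑ t, |γ j t| := by
  have step1 : wedgeL1 x ≤ ∑ f : Fin q → T, (∏ j, |γ j (f j)|) *
      wedgeL1 (fun j => w (f j)) := by
    have hpt : wedgeL1 x ≤ ∑ I : Finset (Fin N), ∑ f : Fin q → T, (∏ j, |γ j (f j)|) *
        (if h' : I.card = q then
          |(Matrix.of fun i j => w (f j) ((I.orderIsoOfFin h' i : Fin N))).det| else 0) := by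
      unfold wedgeL1
      apply Finset.sum_le_sum
      intro I _
      by_cases h : I.card = q
      · rw [dif_pos h]
        have hdet : (Matrix.of fun i j => x j ((I.orderIsoOfFin h i : Fin N))).det
            = ∑ f : Fin q → T, (∏ j, γ j (f j)) *
              (Matrix.of fun i j => w (f j) ((I.orderIsoOfFin h i : Fin N))).det := by
          have hde := det_cols_expand w γ (fun i => (I.orderIsoOfFin h i : Fin N))
          rw [← hde]
          congr 1
          funext i j
          simp [hx]
        rw [hdet]
        refine le_trans (Finset.abs_sum_le_sum_abs _ _) ?_
        apply Finset.sum_le_sum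
        intro f _
        rw [dif_pos h, abs_mul, abs_prod]
      · rw [dif_neg h]
        apply Finset.sum_nonneg
        intro f _
        apply mul_nonneg (Finset.prod_nonneg fun j _ => abs_nonneg _)
        rw [dif_neg h]
    rw [Finset.sum_comm] at hpt
    refine le_trans hpt (le_of_eq ?_)
    apply Finset.sum_congr rfl
    intro f _
    rw [← Finset.mul_sum]
    rfl
  calc wedgeL1 x ≤ ∑ f : Fin q → T, (∏ j, |γ j (f j)|) * wedgeL1 (fun j => w (f j)) := step1
    _ ≤ ∑ f : Fin q → T, (∏ j, |γ j (f j)|) * C := by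
        apply Finset.sum_le_sum
        intro f _
        exact mul_le_mul_of_nonneg_left (hw f) (Finset.prod_nonneg fun j _ => abs_nonneg _)
    _ = C * ∑ f : Fin q → T, ∏ j, |γ j (f j)| := by rw [← Finset.sum_mul, mul_comm]
    _ = C * ∏ j, ∑ t, |γ j t| := by
        congr 1
        rw [Finset.prod_univ_sum (fun _ => Finset.univ) (fun j t => |γ j t|)]
        rw [Fintype.piFinset_univ]

lemma wedge_basis_le_one {N q : ℕ} (m : Fin q → Fin N) :
    wedgeL1 (fun j => fun v => if v = m j then (1:ℝ) else 0) ≤ 1 := by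
  classical
  by_cases hm : Function.Injective m
  · unfold wedgeL1
    have hpt : ∀ I : Finset (Fin N),
        (if h : I.card = q then
          |(Matrix.of fun i j => (fun v => if v = m j then (1:ℝ) else 0)
            ((I.orderIsoOfFin h i : Fin N))).det| else 0)
        ≤ (if I = Finset.image m Finset.univ then (1:ℝ) else 0) := by
      intro I
      have hcardim : (Finset.image m Finset.univ).card = q := by
        rw [Finset.card_image_of_injective _ hm, Finset.card_univ, Fintype.card_fin]
      by_cases h : I.card = q
      · rw [dif_pos h]
        have hemb : Function.Injective (fun i => ((I.orderIsoOfFin h i : Fin N))) := by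
          intro a b hab
          exact (I.orderIsoOfFin h).injective (Subtype.ext hab)
        by_cases hI : I = Finset.image m Finset.univ
        · rw [if_pos hI]
          apply tu_det
          intro j
          exact ⟨pullIdx _ (m j), none, fun i => by
            rw [pullIdx_spec hemb (m j) i]
            simp [eq_comm]⟩
        · rw [if_neg hI]
          have : ∃ j, m j ∉ I := by
            by_contra hcon
            push_neg at hcon
            apply hI
            refine (Finset.eq_of_subset_of_card_le ?_ (by rw [hcardim, h])).symm
            intro v hv
            obtain ⟨j, _, rfl⟩ := Finset.mem_image.mp hv
            exact hcon j
          obtain ⟨j, hj⟩ := this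
          rw [Matrix.det_eq_zero_of_column_eq_zero j ?_]
          · simp
          · intro i
            simp only [Matrix.of_apply]
            rw [if_neg]
            intro hcon
            exact hj (hcon ▸ (I.orderIsoOfFin h i).2)
      · rw [dif_neg h, if_neg (fun hcon => h (by rw [hcon, hcardim]))]
    refine le_trans (Finset.sum_le_sum (fun I _ => hpt I)) ?_
    rw [Finset.sum_ite_eq' Finset.univ (Finset.image m Finset.univ) (fun _ => (1:ℝ))]
    simp
  · -- two equal columns ⇒ every minor vanishes
    have : wedgeL1 (fun j => fun v => if v = m j then (1:ℝ) else 0) = 0 := by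
      unfold wedgeL1
      apply Finset.sum_eq_zero
      intro I _
      by_cases h : I.card = q
      · rw [dif_pos h]
        rw [Function.not_injective_iff] at hm
        obtain ⟨j, j', hjj', hne⟩ := hm
        rw [Matrix.det_zero_of_column_eq hne ?_]
        · simp
        · intro i
          simp only [Matrix.of_apply, hjj']
      · rw [dif_neg h]
    rw [this]
    exact zero_le_one
noncomputable def wterm {N L : ℕ} (x : Fin L → Fin N → ℝ) (I : Finset (Fin N)) : ℝ :=
  if h : I.card = L then
    |(Matrix.of fun i j => x j ((I.orderIsoOfFin h i : Fin N))).det| else 0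

lemma wedgeL1_eq_sum_wterm {N L : ℕ} (x : Fin L → Fin N → ℝ) :
    wedgeL1 x = ∑ I : Finset (Fin N), wterm x I := rfl

lemma wterm_card {N L : ℕ} {x : Fin L → Fin N → ℝ} {I : Finset (Fin N)}
    (h : wterm x I ≠ 0) : I.card = L := by
  by_contra hc
  exact h (dif_neg hc)

lemma wterm_det_ne_zero {N L : ℕ} {x : Fin L → Fin N → ℝ} {I : Finset (Fin N)}
    (hc : I.card = L) (h : wterm x I ≠ 0) :
    (Matrix.of fun i j => x j ((I.orderIsoOfFin hc i : Fin N))).det ≠ 0 := by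
  unfold wterm at h
  rw [dif_pos hc] at h
  intro h0
  exact h (by rw [h0]; simp)

section Edges

variable {N q : ℕ} (p : Fin q → Fin N × Fin N)

/-- The family of edge columns. -/
def edgeW (p : Fin q → Fin N × Fin N) : Fin q → Fin N → ℝ :=
  fun j v => (if v = (p j).1 then (1:ℝ) else 0) - (if v = (p j).2 then 1 else 0)

lemma wedge_edges_le (hqN : q < N) :
    wedgeL1 (edgeW p) ≤ ((N : ℝ) / ((N - q : ℕ) : ℝ)) ^ (N - q) := by
  classical
  have hRHS0 : (0:ℝ) ≤ ((N : ℝ) / ((N - q : ℕ) : ℝ)) ^ (N - q) :=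
    pow_nonneg (div_nonneg (by positivity) (by positivity)) _
  set st : Setoid (Fin N) :=
    Relation.EqvGen.setoid (fun a b => ∃ j, p j = (a, b) ∨ p j = (b, a)) with hst
  letI : DecidableEq (Quotient st) := Classical.decEq _
  letI : Fintype (Quotient st) := @Quotient.fintype _ _ st (Classical.decRel _)
  set K := Fintype.card (Quotient st) with hK
  -- step 0 : each wterm is ≤ 1
  have hterm_le_one : ∀ I : Finset (Fin N), wterm (edgeW p) I ≤ 1 := by
    intro I
    unfold wterm
    by_cases h : I.card = q
    · rw [dif_pos h]
      apply tu_det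
      intro j
      have hemb : Function.Injective (fun i => ((I.orderIsoOfFin h i : Fin N))) :=
        fun a b hab => (I.orderIsoOfFin h).injective (Subtype.ext hab)
      exact isSP_edge hemb (p j).1 (p j).2
    · rw [dif_neg h]; exact zero_le_one
  set G : Finset (Finset (Fin N)) := univ.filter (fun I => wterm (edgeW p) I ≠ 0) with hG
  have hbound1 : wedgeL1 (edgeW p) ≤ (G.card : ℝ) := by
    rw [wedgeL1_eq_sum_wterm]
    calc ∑ I : Finset (Fin N), wterm (edgeW p) I
        ≤ ∑ I : Finset (Fin N), (if wterm (edgeW p) I ≠ 0 then (1:ℝ) else 0) := by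
          apply Finset.sum_le_sum
          intro I _
          by_cases h : wterm (edgeW p) I ≠ 0
          · rw [if_pos h]; exact hterm_le_one I
          · rw [if_neg h]; push_neg at h; rw [h]
      _ = (G.card : ℝ) := by rw [Finset.sum_boole, hG]
  rcases Finset.eq_empty_or_nonempty G with hGe | hGne
  · rw [hGe] at hbound1
    refine le_trans hbound1 ?_
    simpa using hRHS0
  -- the complement of any good `I` meets every equivalence class
  have hmeet : ∀ I ∈ G, ∀ a : Fin N, ∃ b, b ∉ I ∧ st.r a b := by
    intro I hI a
    have hterm : wterm (edgeW p) I ≠ 0 := (Finset.mem_filter.mp hI).2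
    have hcard : I.card = q := wterm_card hterm
    have hdet := wterm_det_ne_zero hcard hterm
    by_contra hcon
    push_neg at hcon
    have hsub : ∀ b, st.r a b → b ∈ I := by
      intro b hr
      by_contra hb
      exact hcon b hb hr
    have strefl : ∀ x : Fin N, st.r x x := fun x => Setoid.refl x
    have strans : ∀ {x y z : Fin N}, st.r x y → st.r y z → st.r x z :=
      fun h1 h2 => Setoid.trans h1 h2
    have stsymm : ∀ {x y : Fin N}, st.r x y → st.r y x := fun h => Setoid.symm h
    set emb : Fin q → Fin N := fun i => ((I.orderIsoOfFin hcard i : Fin N)) with hembdef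
    have hmem : ∀ i, emb i ∈ I := fun i => (I.orderIsoOfFin hcard i).2
    have hsurj : ∀ v ∈ I, ∃ i, emb i = v := by
      intro v hv
      obtain ⟨i, hi⟩ := (I.orderIsoOfFin hcard).surjective ⟨v, hv⟩
      exact ⟨i, by rw [hembdef]; simp [hi]⟩
    set u : Fin q → ℝ := fun i => if st.r a (emb i) then 1 else 0 with hu
    have hune : u ≠ 0 := by
      have haI : a ∈ I := hsub a (strefl a)
      obtain ⟨i₀, hi₀⟩ := hsurj a haI
      intro h0
      have := congrFun h0 i₀
      rw [hu] at this
      simp only [hi₀] at this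
      rw [if_pos (strefl a)] at this
      simpa using this
    have hcnt : ∀ v : Fin N,
        (∑ i, u i * (if emb i = v then (1:ℝ) else 0)) =
          (if st.r a v ∧ v ∈ I then 1 else 0) := by
      intro v
      by_cases hv : v ∈ I
      · obtain ⟨i₀, hi₀⟩ := hsurj v hv
        rw [Finset.sum_eq_single i₀]
        · have hux : u i₀ = (if st.r a v then (1:ℝ) else 0) := by
            rw [hu]; dsimp only; rw [hi₀]
          rw [hi₀, if_pos rfl, mul_one, hux]
          by_cases hr : st.r a v
          · rw [if_pos hr, if_pos ⟨hr, hv⟩]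
          · rw [if_neg hr, if_neg (fun hc => hr hc.1)]
        · intro i _ hne
          rw [if_neg, mul_zero]
          intro hc
          apply hne
          apply (I.orderIsoOfFin hcard).injective (Subtype.ext ?_)
          show emb i = emb i₀
          rw [hc, hi₀]
        · simp
      · rw [Finset.sum_eq_zero, if_neg (fun hc => hv hc.2)]
        intro i _
        rw [if_neg, mul_zero]
        intro hc
        exact hv (hc ▸ hmem i)
    have hedge : ∀ j, st.r (p j).1 (p j).2 := by
      intro j
      exact Relation.EqvGen.rel _ _ ⟨j, Or.inl rfl⟩
    have hvm : Matrix.vecMul u (Matrix.of fun i j => edgeW p j (emb i)) = 0 := by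
      funext j
      have : Matrix.vecMul u (Matrix.of fun i j => edgeW p j (emb i)) j
          = ∑ i, u i * edgeW p j (emb i) := by
        simp [Matrix.vecMul, dotProduct]
      rw [this]
      have hexp : ∀ i, u i * edgeW p j (emb i)
          = u i * (if emb i = (p j).1 then (1:ℝ) else 0)
            - u i * (if emb i = (p j).2 then 1 else 0) := by
        intro i
        rw [edgeW, mul_sub]
      rw [Finset.sum_congr rfl (fun i _ => hexp i), Finset.sum_sub_distrib,
        hcnt (p j).1, hcnt (p j).2]
      by_cases hr : st.r a (p j).1
      · rw [if_pos ⟨hr, hsub _ hr⟩, if_pos ?_]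
        · simp
        · have hr2 : st.r a (p j).2 := strans hr (hedge j)
          exact ⟨hr2, hsub _ hr2⟩
      · rw [if_neg (fun hc => hr hc.1), if_neg ?_]
        · simp
        · intro hc
          exact hr (strans hc.1 (stsymm (hedge j)))
    apply hdet
    rw [← Matrix.exists_vecMul_eq_zero_iff]
    exact ⟨u, hune, hvm⟩
  -- K = N - q
  have hKeq : K = N - q := by
    obtain ⟨I₀, hI₀⟩ := hGne
    have hterm₀ : wterm (edgeW p) I₀ ≠ 0 := (Finset.mem_filter.mp hI₀).2
    have hcard₀ : I₀.card = q := wterm_card hterm₀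
    have hdet₀ := wterm_det_ne_zero hcard₀ hterm₀
    have hlin : LinearIndependent ℝ (edgeW p) := by
      rw [Fintype.linearIndependent_iff]
      intro c hc
      by_contra hcon
      push_neg at hcon
      obtain ⟨i₁, hi₁⟩ := hcon
      apply hdet₀
      rw [← Matrix.exists_mulVec_eq_zero_iff]
      refine ⟨c, fun h0 => hi₁ (by rw [h0]; rfl), ?_⟩
      funext i
      have h1 : ((Matrix.of fun i j => edgeW p j
          ((I₀.orderIsoOfFin hcard₀ i : Fin N))).mulVec c) i
          = ∑ j, c j * edgeW p j ((I₀.orderIsoOfFin hcard₀ i : Fin N)) := by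
        simp [Matrix.mulVec, dotProduct, mul_comm]
      rw [h1]
      have h2 := congrFun hc ((I₀.orderIsoOfFin hcard₀ i : Fin N))
      rw [Finset.sum_apply] at h2
      simpa using h2
    set B : Matrix (Fin q) (Fin N) ℝ := Matrix.of (fun j v => edgeW p j v) with hB
    have hentry : ∀ (v : Fin N → ℝ) (j : Fin q),
        B.mulVecLin v j = v (p j).1 - v (p j).2 := by
      intro v j
      have h1 : B.mulVecLin v j = ∑ u, B j u * v u := by
        simp [Matrix.mulVecLin_apply, Matrix.mulVec, dotProduct]
      rw [h1]
      have h2 : ∀ u, B j u * v u =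
          (if u = (p j).1 then (1:ℝ) else 0) * v u
            - (if u = (p j).2 then (1:ℝ) else 0) * v u := by
        intro u
        rw [hB]
        show edgeW p j u * v u = _
        rw [edgeW, sub_mul]
      rw [Finset.sum_congr rfl (fun u _ => h2 u), Finset.sum_sub_distrib]
      simp [ite_mul]
    have hBrank : B.rank = q := by
      have h1 := Matrix.rank_transpose B
      rw [← h1, Matrix.rank_eq_finrank_span_cols]
      have h2 : Set.range B.transpose.col = Set.range (edgeW p) := rfl
      rw [h2, finrank_span_eq_card hlin, Fintype.card_fin]
    have hranknul := LinearMap.finrank_range_add_finrank_ker B.mulVecLin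
    have hra : Module.finrank ℝ (LinearMap.range B.mulVecLin) = q := hBrank
    have hNfr : Module.finrank ℝ (Fin N → ℝ) = N := by
      rw [Module.finrank_fintype_fun_eq_card, Fintype.card_fin]
    have hker : Module.finrank ℝ (LinearMap.ker B.mulVecLin) = N - q := by
      rw [hra, hNfr] at hranknul
      omega
    set L : (Quotient st → ℝ) →ₗ[ℝ] (Fin N → ℝ) :=
      LinearMap.funLeft ℝ ℝ (Quotient.mk st) with hL
    have hLinj : Function.Injective L :=
      LinearMap.funLeft_injective_of_surjective ℝ ℝ _
        (fun x => Quotient.exists_rep x)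
    have hrange : LinearMap.range L = LinearMap.ker B.mulVecLin := by
      ext v
      rw [LinearMap.mem_ker]
      constructor
      · rintro ⟨g, rfl⟩
        funext j
        rw [hentry]
        have hmkeq : Quotient.mk st (p j).1 = Quotient.mk st (p j).2 :=
          Quotient.sound (Relation.EqvGen.rel _ _ ⟨j, Or.inl rfl⟩)
        show g (Quotient.mk st (p j).1) - g (Quotient.mk st (p j).2) = (0 : Fin q → ℝ) j
        rw [hmkeq]
        simp
      · intro hv
        have hvp : ∀ j, v (p j).1 = v (p j).2 := by
          intro j
          have h3 := congrFun hv j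
          rw [hentry] at h3
          have : (0 : Fin q → ℝ) j = 0 := rfl
          rw [this] at h3
          linarith
        have hresp : ∀ a b : Fin N,
            Relation.EqvGen (fun a b => ∃ j, p j = (a, b) ∨ p j = (b, a)) a b → v a = v b := by
          intro a b hab
          induction hab with
          | rel x y h =>
            obtain ⟨j, hj | hj⟩ := h
            · have := hvp j; rw [hj] at this; exact this
            · have := hvp j; rw [hj] at this; exact this.symm
          | refl x => rfl
          | symm x y _ ih => exact ih.symm
          | trans x y z _ _ ih1 ih2 => exact ih1.trans ih2
        exact ⟨Quotient.lift v (fun a b h => hresp a b h), by funext a; rfl⟩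
    have hfr : Module.finrank ℝ (LinearMap.range L) = K := by
      rw [LinearMap.finrank_range_of_inj hLinj,
        Module.finrank_fintype_fun_eq_card]
    rw [← hfr, hrange]
    exact hker
  -- every good complement meets every class exactly once
  have hfib1 : ∀ I ∈ G, ∀ c : Quotient st,
      ((Iᶜ).filter (fun v => Quotient.mk st v = c)).card = 1 := by
    intro I hI
    have hcard : I.card = q := wterm_card (Finset.mem_filter.mp hI).2
    have hge1 : ∀ c : Quotient st,
        1 ≤ ((Iᶜ).filter (fun v => Quotient.mk st v = c)).card := by
      intro c
      obtain ⟨b, hbI, hbr⟩ := hmeet I hI c.out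
      refine Finset.card_pos.mpr ⟨b, Finset.mem_filter.mpr ⟨Finset.mem_compl.mpr hbI, ?_⟩⟩
      have h1 : Quotient.mk st b = Quotient.mk st c.out := Quotient.sound (Setoid.symm hbr)
      rw [h1, Quotient.out_eq]
    have hsum : ∑ c : Quotient st,
        ((Iᶜ).filter (fun v => Quotient.mk st v = c)).card = (Iᶜ).card :=
      (Finset.card_eq_sum_card_fiberwise (fun x _ => Finset.mem_univ _)).symm
    have hcompl : (Iᶜ).card = K := by
      rw [Finset.card_compl, Fintype.card_fin, hcard, ← hKeq]
    have h1 : ∑ _c : Quotient st, (1:ℕ) = K := by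
      rw [Finset.sum_const, Finset.card_univ, smul_eq_mul, mul_one, hK]
    have hall := (Finset.sum_eq_sum_iff_of_le
      (f := fun _ => (1:ℕ))
      (g := fun c => ((Iᶜ).filter (fun v => Quotient.mk st v = c)).card)
      (fun c _ => hge1 c)).mp (by rw [h1, hsum, hcompl])
    intro c
    exact (hall c (Finset.mem_univ c)).symm
  -- injection into products of fibers
  have hcount : (G.card : ℝ) ≤ ∏ c : Quotient st,
      ((univ.filter (fun v => Quotient.mk st v = c)).card : ℝ) := by
    classical
    set sel : Finset (Fin N) → (∀ c : Quotient st, {v : Fin N // Quotient.mk st v = c}) :=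
      fun I => if hI : I ∈ G then
        (fun c => ⟨(Finset.card_eq_one.mp (hfib1 I hI c)).choose, by
          have hspec := (Finset.card_eq_one.mp (hfib1 I hI c)).choose_spec
          have hmem : (Finset.card_eq_one.mp (hfib1 I hI c)).choose
              ∈ (Iᶜ).filter (fun v => Quotient.mk st v = c) := by
            have h0 := Finset.mem_singleton_self (Finset.card_eq_one.mp (hfib1 I hI c)).choose
            rwa [← hspec] at h0
          exact (Finset.mem_filter.mp hmem).2⟩)
      else (fun c => ⟨c.out, Quotient.out_eq c⟩) with hsel
    have hselval : ∀ I (hI : I ∈ G) (c : Quotient st),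
        (sel I c : Fin N) = (Finset.card_eq_one.mp (hfib1 I hI c)).choose := by
      intro I hI c
      rw [hsel]
      simp only [dif_pos hI]
    have hkey : ∀ I, I ∈ G → ∀ v : Fin N,
        v ∈ Iᶜ ↔ (sel I (Quotient.mk st v) : Fin N) = v := by
      intro I hI v
      have hspec := (Finset.card_eq_one.mp (hfib1 I hI (Quotient.mk st v))).choose_spec
      constructor
      · intro hv
        have hmemf : v ∈ (Iᶜ).filter (fun u => Quotient.mk st u = Quotient.mk st v) :=
          Finset.mem_filter.mpr ⟨hv, rfl⟩
        rw [hspec] at hmemf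
        rw [hselval I hI]
        exact (Finset.mem_singleton.mp hmemf).symm
      · intro hv
        have hchm : (Finset.card_eq_one.mp (hfib1 I hI (Quotient.mk st v))).choose
            ∈ (Iᶜ).filter (fun u => Quotient.mk st u = Quotient.mk st v) := by
          have h0 := Finset.mem_singleton_self
            (Finset.card_eq_one.mp (hfib1 I hI (Quotient.mk st v))).choose
          rwa [← hspec] at h0
        have hin : (Finset.card_eq_one.mp (hfib1 I hI (Quotient.mk st v))).choose ∈ Iᶜ :=
          (Finset.mem_filter.mp hchm).1
        rw [hselval I hI] at hv
        rw [← hv]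
        exact hin
    have hinj : Set.InjOn sel (G : Set (Finset (Fin N))) := by
      intro I₁ h₁ I₂ h₂ heq
      have h₁' : I₁ ∈ G := h₁
      have h₂' : I₂ ∈ G := h₂
      have hcompl : I₁ᶜ = I₂ᶜ := by
        ext v
        rw [hkey I₁ h₁' v, hkey I₂ h₂' v, heq]
      have := congrArg (fun s => sᶜ) hcompl
      simpa using this
    have hcle : G.card ≤ (univ : Finset (∀ c : Quotient st, {v : Fin N // Quotient.mk st v = c})).card :=
      Finset.card_le_card_of_injOn sel (fun a _ => Finset.mem_univ _) hinj
    have hpi : (univ : Finset (∀ c : Quotient st, {v : Fin N // Quotient.mk st v = c})).card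
        = ∏ c : Quotient st, (univ.filter (fun v => Quotient.mk st v = c)).card := by
      rw [Finset.card_univ, Fintype.card_pi]
      apply Finset.prod_congr rfl
      intro c _
      rw [Fintype.card_subtype]
    rw [hpi] at hcle
    calc (G.card : ℝ) ≤ ((∏ c : Quotient st,
          (univ.filter (fun v => Quotient.mk st v = c)).card : ℕ) : ℝ) := Nat.cast_le.mpr hcle
      _ = ∏ c : Quotient st, ((univ.filter (fun v => Quotient.mk st v = c)).card : ℝ) := by
          rw [Nat.cast_prod]
  -- AM-GM
  have hamgm : ∏ c : Quotient st,
      ((univ.filter (fun v => Quotient.mk st v = c)).card : ℝ)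
        ≤ ((N : ℝ) / ((N - q : ℕ) : ℝ)) ^ (N - q) := by
    set z : Quotient st → ℝ :=
      fun c => ((univ.filter (fun v => Quotient.mk st v = c)).card : ℝ) with hz
    have hznn : ∀ c, 0 ≤ z c := fun c => Nat.cast_nonneg _
    have hKpos : 0 < K := by omega
    have hKne : ((K:ℝ)) ≠ 0 := by positivity
    have hsumz : ∑ c, z c = (N : ℝ) := by
      rw [hz, ← Nat.cast_sum]
      congr 1
      rw [← Finset.card_eq_sum_card_fiberwise (fun x _ => Finset.mem_univ _),
        Finset.card_univ, Fintype.card_fin]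
    have hgeom := Real.geom_mean_le_arith_mean_weighted univ (fun _ => 1/(K:ℝ)) z
      (fun _ _ => by positivity)
      (by rw [Finset.sum_const, Finset.card_univ, nsmul_eq_mul, ← hK, mul_one_div,
        div_self hKne])
      (fun c _ => hznn c)
    have harith : ∑ c, (1/(K:ℝ)) * z c = (N:ℝ)/(K:ℝ) := by
      rw [← Finset.mul_sum, hsumz, one_div, inv_mul_eq_div]
    rw [harith] at hgeom
    have hprodeq : ∏ c, z c = (∏ c, z c ^ (1/(K:ℝ))) ^ K := by
      rw [← Finset.prod_pow]
      apply Finset.prod_congr rfl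
      intro c _
      rw [← Real.rpow_natCast (z c ^ (1/(K:ℝ))) K, ← Real.rpow_mul (hznn c),
        one_div, inv_mul_cancel₀ hKne, Real.rpow_one]
    rw [hprodeq]
    have hstep := pow_le_pow_left₀
      (Finset.prod_nonneg (fun c _ => Real.rpow_nonneg (hznn c) _)) hgeom K
    refine le_trans hstep (le_of_eq ?_)
    rw [hKeq]
  exact le_trans hbound1 (le_trans hcount hamgm)

end Edges

lemma wedgeL1_eq_zero_of_col_zero {N L : ℕ} (x : Fin L → Fin N → ℝ)
    (j₀ : Fin L) (h : ∀ v, x j₀ v = 0) : wedgeL1 x = 0 := by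
  unfold wedgeL1
  apply Finset.sum_eq_zero
  intro I _
  by_cases hc : I.card = L
  · rw [dif_pos hc, Matrix.det_eq_zero_of_column_eq_zero j₀ (fun i => h _)]
    simp
  · rw [dif_neg hc]

lemma max_sub_max_neg {a : ℝ} : max a 0 - max (-a) 0 = a := by
  rcases le_total a 0 with h | h
  · rw [max_eq_right h, max_eq_left (by linarith)]; ring
  · rw [max_eq_left h, max_eq_right (by linarith)]; ring

lemma abs_eq_max_add_max {a : ℝ} : |a| = max a 0 + max (-a) 0 := by
  rcases le_total a 0 with h | h
  · rw [max_eq_right h, max_eq_left (by linarith), abs_of_nonpos h]; ring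
  · rw [max_eq_left h, max_eq_right (by linarith), abs_of_nonneg h]; ring

lemma main_ineq {N q : ℕ} (hqN : q < N) (x : Fin q → Fin N → ℝ)
    (hsum : ∀ j, ∑ i, x j i = 0) :
    wedgeL1 x ≤ (2:ℝ)⁻¹ ^ q *
      min ((2:ℝ) ^ q) (((N:ℝ) / ((N - q : ℕ) : ℝ)) ^ (N - q)) * ∏ j, ∑ i, |x j i| := by
  classical
  have hPnn : (0:ℝ) ≤ ∏ j, ∑ i, |x j i| :=
    Finset.prod_nonneg fun j _ => Finset.sum_nonneg fun i _ => abs_nonneg _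
  have hC0 : (0:ℝ) ≤ ((N:ℝ) / ((N - q : ℕ) : ℝ)) ^ (N - q) :=
    pow_nonneg (div_nonneg (by positivity) (by positivity)) _
  have hsplit : (2:ℝ)⁻¹ ^ q *
      min ((2:ℝ) ^ q) (((N:ℝ) / ((N - q : ℕ) : ℝ)) ^ (N - q)) * (∏ j, ∑ i, |x j i|)
      = min ((2:ℝ)⁻¹ ^ q * (2:ℝ) ^ q * (∏ j, ∑ i, |x j i|))
            ((2:ℝ)⁻¹ ^ q * ((N:ℝ) / ((N - q : ℕ) : ℝ)) ^ (N - q) * (∏ j, ∑ i, |x j i|)) := by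
    rw [mul_min_of_nonneg _ _ (by positivity : (0:ℝ) ≤ (2:ℝ)⁻¹ ^ q),
      min_mul_of_nonneg _ _ hPnn]
  rw [hsplit]
  apply le_min
  · -- trivial bound
    have h1 : (2:ℝ)⁻¹ ^ q * (2:ℝ) ^ q = 1 := by
      rw [← mul_pow]; norm_num
    rw [h1, one_mul]
    have := wedgeL1_le_of_decomp (fun m v => if v = m then (1:ℝ) else 0)
      (fun j m => x j m) x
      (fun j v => by simp [mul_ite, Finset.sum_ite_eq])
      (zero_le_one)
      (fun f => wedge_basis_le_one f)
    simpa using this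
  · by_cases hzero : ∃ j, ∑ i, |x j i| = 0
    · obtain ⟨j₀, hj₀⟩ := hzero
      have hxz : ∀ v, x j₀ v = 0 := by
        intro v
        have h0 : ∀ i ∈ univ, |x j₀ i| = 0 :=
          (Finset.sum_eq_zero_iff_of_nonneg (fun i _ => abs_nonneg _)).mp hj₀
        exact abs_eq_zero.mp (h0 v (Finset.mem_univ v))
      rw [wedgeL1_eq_zero_of_col_zero x j₀ hxz]
      have : (∏ j, ∑ i, |x j i|) = 0 := Finset.prod_eq_zero (Finset.mem_univ j₀) hj₀
      rw [this, mul_zero]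
    · push_neg at hzero
      set δ : Fin q → ℝ := fun j => ∑ i, max (x j i) 0 with hδ
      have hδm : ∀ j, ∑ i, max (-(x j i)) 0 = δ j := by
        intro j
        have h1 : ∑ i, (max (x j i) 0 - max (-(x j i)) 0) = 0 := by
          rw [Finset.sum_congr rfl (fun i (_ : i ∈ univ) => (max_sub_max_neg (a := x j i)))]
          exact hsum j
        rw [Finset.sum_sub_distrib] at h1
        have h2 : δ j = ∑ i, max (x j i) 0 := rfl
        linarith
      have habs_sum : ∀ j, ∑ i, |x j i| = 2 * δ j := by
        intro j
        have : ∑ i, |x j i| = ∑ i, (max (x j i) 0 + max (-(x j i)) 0) :=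
          Finset.sum_congr rfl fun i _ => abs_eq_max_add_max
        rw [this, Finset.sum_add_distrib, hδm j]
        rw [hδ]
        ring
      have hδpos : ∀ j, 0 < δ j := by
        intro j
        have h1 : 0 ≤ δ j := Finset.sum_nonneg fun i _ => le_max_right _ _
        rcases lt_or_eq_of_le h1 with h | h
        · exact h
        · exfalso
          apply hzero j
          rw [habs_sum j, ← h, mul_zero]
      -- decomposition into edge vectors
      set γ : Fin q → (Fin N × Fin N) → ℝ :=
        fun j t => max (x j t.1) 0 * max (-(x j t.2)) 0 / δ j with hγ
      have hγnn : ∀ j t, 0 ≤ γ j t := fun j t => by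
        rw [hγ]
        exact div_nonneg (mul_nonneg (le_max_right _ _) (le_max_right _ _)) (hδpos j).le
      have hx : ∀ j v, x j v = ∑ t : Fin N × Fin N,
          γ j t * ((if v = t.1 then (1:ℝ) else 0) - (if v = t.2 then 1 else 0)) := by
        intro j v
        rw [Fintype.sum_prod_type]
        have hterm : ∀ m n, γ j (m, n) * ((if v = m then (1:ℝ) else 0) - (if v = n then 1 else 0))
            = (max (x j m) 0 * (if v = m then (1:ℝ) else 0)) * (max (-(x j n)) 0) / δ j
              - (max (x j m) 0) * (max (-(x j n)) 0 * (if v = n then 1 else 0)) / δ j := by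
          intro m n
          rw [hγ]
          dsimp only
          ring
        rw [Finset.sum_congr rfl fun m _ => Finset.sum_congr rfl fun n _ => hterm m n]
        have h2 : ∀ m : Fin N, ∑ n : Fin N,
            ((max (x j m) 0 * (if v = m then (1:ℝ) else 0)) * (max (-(x j n)) 0) / δ j
              - (max (x j m) 0) * (max (-(x j n)) 0 * (if v = n then 1 else 0)) / δ j)
            = (max (x j m) 0 * (if v = m then (1:ℝ) else 0)) * δ j / δ j
              - (max (x j m) 0) * (max (-(x j v)) 0) / δ j := by
          intro m
          rw [Finset.sum_sub_distrib]
          congr 1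
          · rw [← Finset.sum_div, ← Finset.mul_sum, hδm j]
          · rw [← Finset.sum_div, ← Finset.mul_sum]
            congr 2
            simp [mul_ite, Finset.sum_ite_eq]
        rw [Finset.sum_congr rfl fun m _ => h2 m, Finset.sum_sub_distrib]
        have h3 : ∑ m : Fin N, max (x j m) 0 * (if v = m then (1:ℝ) else 0) * δ j / δ j
            = max (x j v) 0 := by
          have : ∀ m : Fin N, max (x j m) 0 * (if v = m then (1:ℝ) else 0) * δ j / δ j
              = max (x j m) 0 * (if v = m then (1:ℝ) else 0) := by
            intro m
            rw [mul_div_assoc, div_self (hδpos j).ne', mul_one]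
          rw [Finset.sum_congr rfl fun m _ => this m]
          simp [mul_ite, Finset.sum_ite_eq]
        have h4 : ∑ m : Fin N, max (x j m) 0 * max (-(x j v)) 0 / δ j
            = max (-(x j v)) 0 := by
          rw [← Finset.sum_div, ← Finset.sum_mul]
          have hδj : ∑ i, max (x j i) 0 = δ j := rfl
          rw [hδj, mul_comm (δ j), mul_div_assoc, div_self (hδpos j).ne', mul_one]
        rw [h3, h4, max_sub_max_neg]
      have hγsum : ∀ j, ∑ t : Fin N × Fin N, |γ j t| = δ j := by
        intro j
        have h1 : ∑ t : Fin N × Fin N, |γ j t| = ∑ t : Fin N × Fin N, γ j t :=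
          Finset.sum_congr rfl fun t _ => abs_of_nonneg (hγnn j t)
        rw [h1, Fintype.sum_prod_type]
        have h2 : ∀ m : Fin N, ∑ n : Fin N, γ j (m, n) = max (x j m) 0 := by
          intro m
          rw [hγ]
          dsimp only
          rw [← Finset.sum_div, ← Finset.mul_sum, hδm j,
            mul_div_assoc, div_self (hδpos j).ne', mul_one]
        rw [Finset.sum_congr rfl fun m _ => h2 m]
      have hmaster := wedgeL1_le_of_decomp
        (fun t : Fin N × Fin N => fun v =>
          (if v = t.1 then (1:ℝ) else 0) - (if v = t.2 then 1 else 0))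
        γ x hx hC0
        (fun f => wedge_edges_le f hqN)
      rw [Finset.prod_congr rfl (fun j _ => hγsum j)] at hmaster
      refine le_trans hmaster (le_of_eq ?_)
      rw [Finset.prod_congr rfl (fun j (_ : j ∈ univ) => habs_sum j), Finset.prod_mul_distrib]
      rw [Finset.prod_const, Finset.card_univ, Fintype.card_fin]
      rw [show (2:ℝ)⁻¹ ^ q * ((N:ℝ) / ((N - q : ℕ) : ℝ)) ^ (N - q) * ((2:ℝ) ^ q * ∏ j, δ j)
        = ((2:ℝ)⁻¹ ^ q * (2:ℝ) ^ q) * (((N:ℝ) / ((N - q : ℕ) : ℝ)) ^ (N - q) * ∏ j, δ j) by ring]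
      rw [show (2:ℝ)⁻¹ ^ q * (2:ℝ) ^ q = 1 by rw [← mul_pow]; norm_num, one_mul]

/-- Akhtari–Vaaler: for multiplicatively independent `S`-units `α₁,…,α_q` of a number
field `k` (with `|S| = r + 1`, `1 ≤ q ≤ r`), the logarithmic embedding vectors
`α_j = (d_v log‖α_j‖_v)_{v ∈ S} ∈ ℝ^{r+1}` satisfy
`‖α₁ ∧ ⋯ ∧ α_q‖₁ ≤ 2^{−q} C(q,r) Π_j ‖α_j‖₁` with
`C(q,r) = min{2^q, ((r+1)/(r+1−q))^{r+1−q}}`.  The places `v ∈ S` are modelled by an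
injective family of absolute values on `k` with local degrees `d_v`; the `S`-unit
property and the product formula combine to `Π_{v∈S} ‖α_j‖_v^{d_v} = 1`. -/
theorem stmt19 (k : Type*) [Field k] [NumberField k] (r q : ℕ) (hq : 1 ≤ q) (hqr : q ≤ r)
    (V : Type*) [Fintype V] (hV : Fintype.card V = r + 1)
    (absv : V → AbsoluteValue k ℝ) (habs : Function.Injective absv)
    (d : V → ℕ) (hd : ∀ v, 1 ≤ d v)
    (α : Fin q → kˣ)
    (hprod : ∀ j, ∏ v, absv v (α j : k) ^ d v = 1)
    (hind : ∀ e : Fin q → ℤ, (∃ n : ℕ, 0 < n ∧ (∏ j, α j ^ e j) ^ n = 1) → e = 0) :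
    let A : Fin q → Fin (r + 1) → ℝ := fun j i =>
      (d ((Fintype.equivFinOfCardEq hV).symm i) : ℝ) *
        Real.log (absv ((Fintype.equivFinOfCardEq hV).symm i) (α j : k))
    wedgeL1 A ≤
      (2 : ℝ)⁻¹ ^ q *
        min ((2 : ℝ) ^ q) ((((r : ℝ) + 1) / ((r : ℝ) + 1 - (q : ℝ))) ^ (r + 1 - q)) *
        ∏ j, ∑ i, |A j i| := by
  intro A
  have hq' : q < r + 1 := by omega
  have hsum : ∀ j, ∑ i, A j i = 0 := by
    intro j
    have h1 : ∑ i : Fin (r+1), A j i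
        = ∑ v : V, (d v : ℝ) * Real.log (absv v (α j : k)) :=
      Equiv.sum_comp (Fintype.equivFinOfCardEq hV).symm
        (fun v => (d v : ℝ) * Real.log (absv v (α j : k)))
    rw [h1]
    have hpos : ∀ v : V, absv v (α j : k) ≠ 0 := fun v =>
      ne_of_gt ((absv v).pos (Units.ne_zero (α j)))
    have h2 : ∑ v : V, (d v : ℝ) * Real.log (absv v (α j : k))
        = Real.log (∏ v : V, absv v (α j : k) ^ d v) := by
      rw [Real.log_prod (fun v _ => pow_ne_zero _ (hpos v))]
      exact Finset.sum_congr rfl fun v _ => (Real.log_pow _ _).symm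
    rw [h2, hprod j, Real.log_one]
  have hmain := main_ineq hq' A hsum
  have hcast : (((r+1 : ℕ)):ℝ) / ((((r+1) - q : ℕ)):ℝ) = ((r:ℝ)+1)/((r:ℝ)+1-(q:ℝ)) := by
    rw [Nat.cast_sub (by omega : q ≤ r + 1)]
    push_cast
    ring
  rw [← hcast]
  exact hmain
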